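/- Let F_q be a finite field and A, B ⊆ F_q with |A|·|B| > q. If A is symmetric (A = −A) or antisymmetric (A ∩ (−A) = ∅), or if B is symmetric or antisymmetric, then 8·(AB) = F_q. -/

import Mathlib

open Finset Pointwise

namespace Glib12

variable {F : Type*} [Field F] [Fintype F] [DecidableEq F]

lemma haux {P I E c : ℕ} (h1 : P ^ 2 ≤ I * E) (h2 : c * E < 2 * P ^ 2) : c < I + I := by
  by_contra hle
  push_neg at hle
  have h3 : 2 * P ^ 2 ≤ 2 * (I * E) := Nat.mul_le_mul_left 2 h1
  have h4 : 2 * (I * E) = (I + I) * E := by ring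
  have h5 : (I + I) * E ≤ c * E := Nat.mul_le_mul_right E hle
  linarith

lemma cover (X Y : Finset F) (h : Fintype.card F < X.card + Y.card) (x : F) :
    ∃ u ∈ X, ∃ v ∈ Y, x = u + v := by
  by_contra hc
  push_neg at hc
  have hdisj : Disjoint X (Y.image (fun v => x - v)) := by
    rw [Finset.disjoint_left]
    intro z hzX hzY
    obtain ⟨v, hv, rfl⟩ := mem_image.1 hzY
    exact hc _ hzX _ hv (by ring)
  have hcard := Finset.card_union_of_disjoint hdisj
  have h1 : (X ∪ Y.image (fun v => x - v)).card ≤ Fintype.card F := by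
    simpa using Finset.card_le_univ _
  have h2 : (Y.image (fun v => x - v)).card = Y.card :=
    Finset.card_image_of_injective _ sub_right_injective
  omega

lemma sq_sum_le {γ : Type*} (t : Finset γ) (g : γ → ℕ) :
    (∑ c ∈ t, g c) ^ 2 ≤ t.card * ∑ c ∈ t, g c ^ 2 := by
  have key : 2 * (∑ c ∈ t, g c) ^ 2 ≤ 2 * (t.card * ∑ c ∈ t, g c ^ 2) := by
    have h1 : (∑ c ∈ t, g c) ^ 2 = ∑ i ∈ t, ∑ j ∈ t, g i * g j := by
      rw [sq, Finset.sum_mul_sum]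
    calc 2 * (∑ c ∈ t, g c) ^ 2 = ∑ i ∈ t, ∑ j ∈ t, 2 * (g i * g j) := by
          rw [h1, Finset.mul_sum]
          exact Finset.sum_congr rfl fun i _ => by rw [Finset.mul_sum]
      _ ≤ ∑ i ∈ t, ∑ j ∈ t, (g i ^ 2 + g j ^ 2) := by
          refine Finset.sum_le_sum fun i _ => Finset.sum_le_sum fun j _ => ?_
          zify
          nlinarith [sq_nonneg ((g i : ℤ) - (g j : ℤ))]
      _ = ∑ i ∈ t, (t.card * g i ^ 2 + ∑ j ∈ t, g j ^ 2) := by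
          refine Finset.sum_congr rfl fun i _ => ?_
          rw [Finset.sum_add_distrib, Finset.sum_const, smul_eq_mul]
      _ = 2 * (t.card * ∑ c ∈ t, g c ^ 2) := by
          rw [Finset.sum_add_distrib, Finset.sum_const, smul_eq_mul, ← Finset.mul_sum]
          ring
  omega

lemma cs {γ : Type*} [DecidableEq γ] (s : Finset γ) (f : γ → F) :
    s.card ^ 2 ≤ (s.image f).card *
      ((s ×ˢ s).filter fun p => f p.1 = f p.2).card := by
  classical
  have hfib : s.card = ∑ c ∈ s.image f, (s.filter fun z => f z = c).card :=
    card_eq_sum_card_fiberwise fun z hz => mem_image_of_mem f hz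
  have hE : ((s ×ˢ s).filter fun p => f p.1 = f p.2).card
      = ∑ c ∈ s.image f, ((s.filter fun z => f z = c).card) ^ 2 := by
    have hmap : ∀ p ∈ (s ×ˢ s).filter fun p => f p.1 = f p.2, f p.1 ∈ s.image f := by
      intro p hp
      rw [mem_filter, mem_product] at hp
      exact mem_image_of_mem f hp.1.1
    rw [card_eq_sum_card_fiberwise hmap]
    refine Finset.sum_congr rfl fun c hc => ?_
    have hset : (((s ×ˢ s).filter fun p => f p.1 = f p.2).filter fun p => f p.1 = c)
        = (s.filter fun z => f z = c) ×ˢ (s.filter fun z => f z = c) := by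
      ext ⟨u, v⟩
      simp only [mem_filter, mem_product]
      constructor
      · rintro ⟨⟨⟨hu, hv⟩, heq⟩, hc1⟩
        exact ⟨⟨hu, hc1⟩, hv, heq ▸ hc1⟩
      · rintro ⟨⟨hu, hc1⟩, hv, hc2⟩
        exact ⟨⟨⟨hu, hv⟩, by rw [hc1, hc2]⟩, hc1⟩
    rw [hset, card_product, sq]
  calc s.card ^ 2 = (∑ c ∈ s.image f, (s.filter fun z => f z = c).card) ^ 2 := by rw [← hfib]
    _ ≤ (s.image f).card * ∑ c ∈ s.image f, ((s.filter fun z => f z = c).card) ^ 2 :=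
        sq_sum_le _ _
    _ = _ := by rw [hE]

lemma exists_eta (A B : Finset F) (h : Fintype.card F < A.card * B.card) :
    ∃ η : F, Fintype.card F *
        (((A ×ˢ B) ×ˢ (A ×ˢ B)).filter fun p =>
          p.1.1 + η * p.1.2 = p.2.1 + η * p.2.2).card
      < 2 * (A.card * B.card) ^ 2 := by
  classical
  by_contra hno
  push_neg at hno
  have hqpos : 0 < Fintype.card F := Fintype.card_pos
  have hPpos : 0 < A.card * B.card := lt_of_le_of_lt (Nat.zero_le _) h
  have hperq : ∀ p ∈ (A ×ˢ B) ×ˢ (A ×ˢ B),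
      (univ.filter fun η : F => p.1.1 + η * p.1.2 = p.2.1 + η * p.2.2).card
        ≤ if p.1 = p.2 then Fintype.card F else 1 := by
    intro p _
    split_ifs with hpe
    · exact (card_filter_le _ _).trans (by rw [card_univ])
    · rw [card_le_one]
      intro η1 h1 η2 h2
      rw [mem_filter] at h1 h2
      by_cases hb : p.1.2 = p.2.2
      · exfalso
        apply hpe
        refine Prod.ext ?_ hb
        have h1' := h1.2
        rw [hb] at h1'
        exact add_right_cancel h1'
      · have h3 : (η1 - η2) * (p.1.2 - p.2.2) = 0 := by linear_combination h1.2 - h2.2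
        rcases mul_eq_zero.1 h3 with h4 | h4
        · exact sub_eq_zero.1 h4
        · exact absurd h4 (sub_ne_zero.2 hb)
  have hdiag : (((A ×ˢ B) ×ˢ (A ×ˢ B)).filter fun p => p.1 = p.2).card
      ≤ A.card * B.card := by
    rw [← card_product]
    apply card_le_card_of_injOn (fun p => p.1)
    · intro p hp
      rw [mem_coe, mem_filter, mem_product] at hp
      exact hp.1.1
    · intro p hp r hr hpr
      simp only [coe_filter, Set.mem_setOf_eq] at hp hr
      exact Prod.ext hpr (by rw [← hp.2, ← hr.2]; exact hpr)
  have hsum2 : ∑ p ∈ (A ×ˢ B) ×ˢ (A ×ˢ B), (if p.1 = p.2 then Fintype.card F else 1)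
      ≤ Fintype.card F * (A.card * B.card) + (A.card * B.card) ^ 2 := by
    rw [Finset.sum_ite, Finset.sum_const, Finset.sum_const, smul_eq_mul, smul_eq_mul, mul_one]
    refine add_le_add ?_ ?_
    · rw [mul_comm]
      exact Nat.mul_le_mul_left _ hdiag
    · refine (card_filter_le _ _).trans ?_
      rw [card_product, card_product]
      exact le_of_eq (by ring)
  have hswap : (∑ η : F, (((A ×ˢ B) ×ˢ (A ×ˢ B)).filter fun p =>
        p.1.1 + η * p.1.2 = p.2.1 + η * p.2.2).card)
      = ∑ p ∈ (A ×ˢ B) ×ˢ (A ×ˢ B),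
          (univ.filter fun η : F => p.1.1 + η * p.1.2 = p.2.1 + η * p.2.2).card := by
    simp_rw [card_filter]
    exact Finset.sum_comm
  have hStot : (∑ η : F, (((A ×ˢ B) ×ˢ (A ×ˢ B)).filter fun p =>
        p.1.1 + η * p.1.2 = p.2.1 + η * p.2.2).card)
      ≤ Fintype.card F * (A.card * B.card) + (A.card * B.card) ^ 2 := by
    rw [hswap]
    exact le_trans (Finset.sum_le_sum hperq) hsum2
  have hlow : Fintype.card F * (2 * (A.card * B.card) ^ 2)
      ≤ Fintype.card F * (Fintype.card F * (A.card * B.card) + (A.card * B.card) ^ 2) := by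
    calc Fintype.card F * (2 * (A.card * B.card) ^ 2)
        = ∑ _η : F, 2 * (A.card * B.card) ^ 2 := by
          rw [Finset.sum_const, card_univ, smul_eq_mul]
      _ ≤ ∑ η : F, Fintype.card F * (((A ×ˢ B) ×ˢ (A ×ˢ B)).filter fun p =>
            p.1.1 + η * p.1.2 = p.2.1 + η * p.2.2).card :=
          Finset.sum_le_sum fun η _ => hno η
      _ = Fintype.card F * ∑ η : F, (((A ×ˢ B) ×ˢ (A ×ˢ B)).filter fun p =>
            p.1.1 + η * p.1.2 = p.2.1 + η * p.2.2).card := by rw [Finset.mul_sum]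
      _ ≤ _ := Nat.mul_le_mul_left _ hStot
  have hkey : 2 * (A.card * B.card) ^ 2
      ≤ Fintype.card F * (A.card * B.card) + (A.card * B.card) ^ 2 :=
    Nat.le_of_mul_le_mul_left hlow hqpos
  have h5 : (A.card * B.card) ^ 2 ≤ Fintype.card F * (A.card * B.card) := by linarith
  rw [pow_two] at h5
  have h6 : A.card * B.card ≤ Fintype.card F := Nat.le_of_mul_le_mul_right h5 hPpos
  exact absurd h (not_lt.2 h6)

lemma master (A B : Finset F) (h : Fintype.card F < A.card * B.card)
    (hB : B = -B ∨ B ∩ (-B) = ∅) (x : F) :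
    ∃ a b : Fin 8 → F, (∀ i, a i ∈ A) ∧ (∀ i, b i ∈ B) ∧ x = ∑ i, a i * b i := by
  classical
  obtain ⟨η, hη⟩ := exists_eta A B h
  have e1 : (((A ×ˢ B) ×ˢ (A ×ˢ B)).filter fun p =>
        (fun z : F × F => z.1 + η * z.2) p.1 = (fun z : F × F => z.1 + η * z.2) p.2)
      = (((A ×ˢ B) ×ˢ (A ×ˢ B)).filter fun p =>
        p.1.1 + η * p.1.2 = p.2.1 + η * p.2.2) :=
    Finset.filter_congr fun p _ => Iff.rfl
  have e2 : (((A ×ˢ B) ×ˢ (A ×ˢ B)).filter fun p =>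
        (fun z : F × F => z.1 - η * z.2) p.1 = (fun z : F × F => z.1 - η * z.2) p.2)
      = (((A ×ˢ B) ×ˢ (A ×ˢ B)).filter fun p =>
        p.1.1 - η * p.1.2 = p.2.1 - η * p.2.2) :=
    Finset.filter_congr fun p _ => Iff.rfl
  have hEpm : (((A ×ˢ B) ×ˢ (A ×ˢ B)).filter fun p =>
        p.1.1 - η * p.1.2 = p.2.1 - η * p.2.2).card
      = (((A ×ˢ B) ×ˢ (A ×ˢ B)).filter fun p =>
        p.1.1 + η * p.1.2 = p.2.1 + η * p.2.2).card := by
    refine Finset.card_bij' (fun p _ => ((p.1.1, p.2.2), (p.2.1, p.1.2)))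
      (fun p _ => ((p.1.1, p.2.2), (p.2.1, p.1.2))) ?_ ?_ (fun p hp => rfl) (fun p hp => rfl)
    · intro p hp
      simp only [mem_filter, mem_product] at hp ⊢
      obtain ⟨⟨⟨h11, h12⟩, h21, h22⟩, heq⟩ := hp
      exact ⟨⟨⟨h11, h22⟩, h21, h12⟩, by linear_combination heq⟩
    · intro p hp
      simp only [mem_filter, mem_product] at hp ⊢
      obtain ⟨⟨⟨h11, h12⟩, h21, h22⟩, heq⟩ := hp
      exact ⟨⟨⟨h11, h22⟩, h21, h12⟩, by linear_combination heq⟩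
  have hcsp := cs (A ×ˢ B) (fun z : F × F => z.1 + η * z.2)
  have hcsm := cs (A ×ˢ B) (fun z : F × F => z.1 - η * z.2)
  rw [card_product, e1] at hcsp
  rw [card_product, e2] at hcsm
  have himp : Fintype.card F < ((A ×ˢ B).image fun z : F × F => z.1 + η * z.2).card
      + ((A ×ˢ B).image fun z : F × F => z.1 + η * z.2).card :=
    haux hcsp hη
  have himm : Fintype.card F < ((A ×ˢ B).image fun z : F × F => z.1 - η * z.2).card
      + ((A ×ˢ B).image fun z : F × F => z.1 - η * z.2).card :=
    haux hcsm (by rw [hEpm]; exact hη)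
  rcases hB with hsym | hanti
  · -- B symmetric
    have hnegB : ∀ y, y ∈ B → -y ∈ B := by
      intro y hy
      have h1 : -y ∈ -B := neg_mem_neg hy
      rwa [← hsym] at h1
    have hcard2 : (univ : Finset F).card < (A ×ˢ B).card := by
      rw [card_univ, card_product]; exact h
    obtain ⟨p1, hp1, p2, hp2, hpne, hpeq⟩ :=
      Finset.exists_ne_map_eq_of_card_lt_of_maps_to
        (f := fun p : F × F => η * p.2 - p.1) hcard2 (fun p _ => mem_univ _)
    obtain ⟨ha5, hb5⟩ := mem_product.1 hp1
    obtain ⟨ha6, hb6⟩ := mem_product.1 hp2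
    have hpeq' : η * p1.2 - p1.1 = η * p2.2 - p2.1 := hpeq
    have hbne : p1.2 ≠ p2.2 := by
      intro hbb
      apply hpne
      refine Prod.ext ?_ hbb
      have h' := hpeq'
      rw [hbb] at h'
      linear_combination -h'
    have hdne : p1.2 - p2.2 ≠ 0 := sub_ne_zero.2 hbne
    obtain ⟨u, hu, v, hv, huv⟩ := cover ((A ×ˢ B).image fun z : F × F => z.1 + η * z.2)
      (((A ×ˢ B).image fun z : F × F => z.1 + η * z.2).image (fun t => -t))
      (by rw [card_image_of_injective _ neg_injective]; exact himp)
      (x / (p1.2 - p2.2))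
    obtain ⟨pu, hpu, rfl⟩ := mem_image.1 hu
    obtain ⟨v', hv', rfl⟩ := mem_image.1 hv
    obtain ⟨pv, hpv, rfl⟩ := mem_image.1 hv'
    obtain ⟨ha1, hb1⟩ := mem_product.1 hpu
    obtain ⟨ha2, hb2⟩ := mem_product.1 hpv
    rw [div_eq_iff hdne] at huv
    have hb5' := hnegB _ hb5
    have hb6' := hnegB _ hb6
    have hb1' := hnegB _ hb1
    have hb2' := hnegB _ hb2
    refine ⟨![pu.1, pu.1, pv.1, pv.1, p1.1, p1.1, p2.1, p2.1],
      ![p1.2, -p2.2, -p1.2, p2.2, pu.2, -pv.2, -pu.2, pv.2], ?_, ?_, ?_⟩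
    · intro i; fin_cases i <;> simp <;> assumption
    · intro i; fin_cases i <;> simp <;> assumption
    · simp only [Fin.sum_univ_succ, Fin.sum_univ_zero, Matrix.cons_val_zero,
        Matrix.cons_val_succ]
      linear_combination huv + (pu.2 - pv.2) * hpeq'
  · -- B antisymmetric
    obtain ⟨u, hu, v, hv, huv0⟩ := cover ((A ×ˢ B).image fun z : F × F => z.1 + η * z.2)
      ((A ×ˢ B).image fun z : F × F => z.1 + η * z.2) himp 0
    obtain ⟨p1, hp1, rfl⟩ := mem_image.1 hu
    obtain ⟨p2, hp2, rfl⟩ := mem_image.1 hv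
    obtain ⟨ha5, hb5⟩ := mem_product.1 hp1
    obtain ⟨ha6, hb6⟩ := mem_product.1 hp2
    have hdne : p1.2 + p2.2 ≠ 0 := by
      intro h0
      have h1 : p2.2 = -p1.2 := by linear_combination h0
      have h2 : p2.2 ∈ B ∩ (-B) := mem_inter.2 ⟨hb6, h1 ▸ neg_mem_neg hb5⟩
      rw [hanti] at h2
      exact absurd h2 (Finset.notMem_empty _)
    obtain ⟨u, hu, v, hv, huv⟩ := cover ((A ×ˢ B).image fun z : F × F => z.1 - η * z.2)
      ((A ×ˢ B).image fun z : F × F => z.1 - η * z.2) himm (x / (p1.2 + p2.2))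
    obtain ⟨pu, hpu, rfl⟩ := mem_image.1 hu
    obtain ⟨pv, hpv, rfl⟩ := mem_image.1 hv
    obtain ⟨ha1, hb1⟩ := mem_product.1 hpu
    obtain ⟨ha2, hb2⟩ := mem_product.1 hpv
    rw [div_eq_iff hdne] at huv
    refine ⟨![pu.1, pu.1, pv.1, pv.1, p1.1, p1.1, p2.1, p2.1],
      ![p1.2, p2.2, p1.2, p2.2, pu.2, pv.2, pu.2, pv.2], ?_, ?_, ?_⟩
    · intro i; fin_cases i <;> simp <;> assumption
    · intro i; fin_cases i <;> simp <;> assumption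
    · simp only [Fin.sum_univ_succ, Fin.sum_univ_zero, Matrix.cons_val_zero,
        Matrix.cons_val_succ]
      linear_combination huv + (pu.2 + pv.2) * huv0

end Glib12

open Pointwise in
theorem stmt_12 {F : Type*} [Field F] [Fintype F] [DecidableEq F] (q : ℕ)
    (hq : Fintype.card F = q) (A B : Finset F) (h : q < A.card * B.card)
    (hsym : A = -A ∨ A ∩ (-A) = ∅ ∨ B = -B ∨ B ∩ (-B) = ∅) :
    ∀ x : F, ∃ a b : Fin 8 → F, (∀ i, a i ∈ A) ∧ (∀ i, b i ∈ B) ∧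
      x = ∑ i, a i * b i := by
  intro x
  rw [← hq] at h
  rcases hsym with h1 | h1 | h1 | h1
  · obtain ⟨a, b, ha, hb, hx⟩ := Glib12.master B A (by rwa [mul_comm] at h) (Or.inl h1) x
    exact ⟨b, a, hb, ha, by rw [hx]; exact Finset.sum_congr rfl fun i _ => mul_comm _ _⟩
  · obtain ⟨a, b, ha, hb, hx⟩ := Glib12.master B A (by rwa [mul_comm] at h) (Or.inr h1) x
    exact ⟨b, a, hb, ha, by rw [hx]; exact Finset.sum_congr rfl fun i _ => mul_comm _ _⟩
  · exact Glib12.master A B h (Or.inl h1) x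
  · exact Glib12.master A B h (Or.inr h1) x
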